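/- (Artin–Tate application) Let R ⊆ C ⊆ A be rings with C central in A, A finitely generated as an R-algebra, A finitely generated as a C-module, and A noetherian. Then C is a finitely generated R-algebra. -/

import Mathlib

open Submodule

section AuxArtinTate

private theorem ArtinTateAux.formanek {R M : Type*} [CommRing R] [AddCommGroup M] [Module R M]
    [Module.Finite R M]
    (H : ∀ S : Set (Submodule R M), S.Nonempty →
      (∀ p ∈ S, ∃ I : Ideal R, p = I • ⊤) → ∃ p ∈ S, ∀ q ∈ S, p ≤ q → q = p) :
    IsNoetherian R M := by
  classical
  by_contra hM
  set S : Set (Submodule R M) :=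
    {p | (∃ I : Ideal R, p = I • (⊤ : Submodule R M)) ∧ ¬ IsNoetherian R (M ⧸ p)} with hSdef
  have hbot : (⊥ : Submodule R M) ∈ S := by
    refine ⟨⟨⊥, by simp⟩, fun h => hM ?_⟩
    exact isNoetherian_of_linearEquiv (Submodule.quotEquivOfEqBot ⊥ rfl)
  obtain ⟨p₀, hp₀S, hp₀max⟩ := H S ⟨⊥, hbot⟩ (fun p hp => hp.1)
  obtain ⟨I₀, hI₀⟩ := hp₀S.1
  -- ★ : quotients of M ⧸ p₀ by nonzero `J • ⊤` are noetherian
  have star : ∀ J : Ideal R, J • (⊤ : Submodule R (M ⧸ p₀)) ≠ ⊥ →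
      IsNoetherian R ((M ⧸ p₀) ⧸ (J • (⊤ : Submodule R (M ⧸ p₀)))) := by
    intro J hJ
    have hmap : J • (⊤ : Submodule R (M ⧸ p₀)) = Submodule.map p₀.mkQ (J • ⊤) := by
      rw [Submodule.map_smul'', Submodule.map_top, Submodule.range_mkQ]
    have hnle : ¬ (J • (⊤ : Submodule R M) ≤ p₀) := by
      intro hle
      apply hJ
      rw [hmap, eq_bot_iff]
      rintro x ⟨y, hy, rfl⟩
      simpa [Submodule.mkQ_apply, Submodule.Quotient.mk_eq_zero] using hle hy
    set q : Submodule R M := p₀ ⊔ J • ⊤ with hq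
    have hq' : q = (I₀ ⊔ J) • ⊤ := by rw [hq, hI₀, Submodule.sup_smul]
    have hqne : q ≠ p₀ := by
      intro h
      exact hnle (le_trans le_sup_right h.le)
    have hqnoeth : IsNoetherian R (M ⧸ q) := by
      by_contra hq''
      exact hqne (hp₀max q ⟨⟨_, hq'⟩, hq''⟩ le_sup_left)
    have hmapq : Submodule.map p₀.mkQ q = J • (⊤ : Submodule R (M ⧸ p₀)) := by
      rw [hq, Submodule.map_sup, hmap]
      have : Submodule.map p₀.mkQ p₀ = ⊥ := by
        rw [eq_bot_iff]
        rintro x ⟨y, hy, rfl⟩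
        simpa [Submodule.mkQ_apply, Submodule.Quotient.mk_eq_zero] using hy
      rw [this, bot_sup_eq]
    have e := Submodule.quotientQuotientEquivQuotient p₀ q le_sup_left
    rw [hmapq] at e
    exact isNoetherian_of_linearEquiv e.symm
  -- the annihilator-type ideal
  set T : Ideal R := (⊥ : Submodule R (M ⧸ p₀)).colon ⊤ with hT
  set Ω : Set (Submodule R (M ⧸ p₀)) := {N | N.colon ⊤ ≤ T} with hΩ
  obtain ⟨s, hs⟩ := (Module.Finite.fg_top : (⊤ : Submodule R (M ⧸ p₀)).FG)
  have hfg : (⊤ : Submodule R (M ⧸ p₀)).FG := ⟨s, hs⟩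
  -- Zorn's lemma
  have hzorn : ∃ N₀, N₀ ∈ Ω ∧ ∀ z ∈ Ω, N₀ ≤ z → z ≤ N₀ := by
    have hchains : ∀ c ⊆ Ω, IsChain (· ≤ ·) c → ∀ N ∈ c, ∃ ub ∈ Ω, ∀ z ∈ c, z ≤ ub := by
      intro c hcΩ hchain N hNc
      have hcne : c.Nonempty := ⟨N, hNc⟩
      refine ⟨sSup c, ?_, fun z hz => le_sSup hz⟩
      intro r hr
      have hr' := Submodule.mem_colon.mp hr
      have hdir := hchain.directedOn
      have key : ∀ t : Finset (M ⧸ p₀), ∃ N' ∈ c, ∀ x ∈ t, r • x ∈ N' := by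
        intro t
        induction t using Finset.induction_on with
        | empty => exact ⟨N, hNc, by simp⟩
        | @insert a t ha ih =>
          obtain ⟨N₁, hN₁c, hN₁⟩ := ih
          obtain ⟨N₂, hN₂c, hN₂⟩ :=
            (Submodule.mem_sSup_of_directed hcne hdir).mp (hr' a trivial)
          rcases hchain.total hN₁c hN₂c with h | h
          · refine ⟨N₂, hN₂c, fun x hx => ?_⟩
            rcases Finset.mem_insert.mp hx with rfl | hx'
            exacts [hN₂, h (hN₁ x hx')]
          · refine ⟨N₁, hN₁c, fun x hx => ?_⟩
            rcases Finset.mem_insert.mp hx with rfl | hx'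
            exacts [h hN₂, hN₁ x hx']
      obtain ⟨N', hN'c, hN'⟩ := key s
      have hallm : ∀ m : M ⧸ p₀, r • m ∈ N' := by
        intro m
        have hm : m ∈ Submodule.span R (s : Set (M ⧸ p₀)) := by rw [hs]; trivial
        refine Submodule.span_induction (fun x hx => hN' x hx) (by simp)
          (fun a b _ _ ha hb => by rw [smul_add]; exact add_mem ha hb)
          (fun a x _ hx' => ?_) hm
        rw [smul_comm]
        exact N'.smul_mem a hx'
      exact hcΩ hN'c (Submodule.mem_colon.mpr fun m _ => hallm m)
    obtain ⟨m, -, hm⟩ := zorn_le_nonempty₀ Ω hchains ⊥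
      (show (⊥ : Submodule R (M ⧸ p₀)).colon ⊤ ≤ T from le_rfl)
    exact ⟨m, hm.1, fun z hz hle => hm.2 hz hle⟩
  obtain ⟨N₀, hN₀Ω, hN₀max⟩ := hzorn
  -- every submodule strictly above N₀ is finitely generated
  have hN₀colon : N₀.colon ⊤ = T :=
    le_antisymm hN₀Ω (Submodule.colon_mono bot_le le_rfl)
  -- every submodule strictly above N₀ is finitely generated
  have hfgP : ∀ P : Submodule R (M ⧸ p₀), N₀ < P → P.FG := by
    intro P hP
    have hPn : ¬ (P.colon ⊤ ≤ T) := by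
      intro h
      exact hP.ne' (le_antisymm (hN₀max P h hP.le) hP.le)
    obtain ⟨r, hrP, hrT⟩ := SetLike.not_le_iff_exists.mp hPn
    set Q : Submodule R (M ⧸ p₀) := Ideal.span {r} • ⊤ with hQdef
    have hQP : Q ≤ P := by
      refine Submodule.smul_le.mpr fun i hi m hm => ?_
      obtain ⟨c, rfl⟩ := Ideal.mem_span_singleton'.mp hi
      rw [mul_smul]
      exact P.smul_mem c (Submodule.mem_colon.mp hrP m trivial)
    have hQne : Q ≠ ⊥ := by
      intro h
      apply hrT
      refine Submodule.mem_colon.mpr fun m _ => ?_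
      have : r • m ∈ Q :=
        Submodule.smul_mem_smul (Ideal.mem_span_singleton_self r) trivial
      rw [h] at this
      exact this
    haveI := star (Ideal.span {r}) hQne
    -- Q is finitely generated
    have hQfg : Q.FG := by
      have hQeq : Q = Submodule.map ((DistribMulAction.toLinearMap R (M ⧸ p₀) r)) ⊤ := by
        apply le_antisymm
        · refine Submodule.smul_le.mpr fun i hi m _ => ?_
          obtain ⟨c, rfl⟩ := Ideal.mem_span_singleton'.mp hi
          refine ⟨c • m, trivial, ?_⟩
          show r • (c • m) = _
          rw [mul_smul, smul_comm]
        · rintro x ⟨y, -, rfl⟩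
          exact Submodule.smul_mem_smul (Ideal.mem_span_singleton_self r) trivial
      rw [hQeq]
      exact Submodule.FG.map _ hfg
    refine Submodule.fg_of_fg_map_of_fg_inf_ker Q.mkQ ?_ ?_
    · exact IsNoetherian.noetherian _
    · rw [Submodule.ker_mkQ, inf_eq_right.mpr hQP]
      exact hQfg
  -- hence M ⧸ p₀ ⧸ N₀ is noetherian
  have hnoethQuot : IsNoetherian R ((M ⧸ p₀) ⧸ N₀) := by
    rw [isNoetherian_def]
    intro t
    have ht : t = Submodule.map N₀.mkQ (Submodule.comap N₀.mkQ t) :=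
      (Submodule.map_comap_eq_of_surjective (Submodule.mkQ_surjective N₀) t).symm
    have hle : N₀ ≤ Submodule.comap N₀.mkQ t := fun y hy => by
      have h0 : N₀.mkQ y = 0 := (Submodule.Quotient.mk_eq_zero N₀).mpr hy
      simp [Submodule.mem_comap, h0]
    rcases eq_or_lt_of_le hle with h | h
    · rw [ht, ← h]
      convert Submodule.fg_bot
      rw [eq_bot_iff]
      rintro x ⟨y, hy, rfl⟩
      simpa [Submodule.mkQ_apply, Submodule.Quotient.mk_eq_zero] using hy
    · rw [ht]
      exact (hfgP _ h).map _
  -- final contradiction: M ⧸ p₀ is noetherian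
  apply hp₀S.2
  obtain ⟨n, x, hx⟩ := Module.Finite.exists_fin (R := R) (M := M ⧸ p₀)
  -- R ⧸ T is a noetherian R-module
  let f : R →ₗ[R] (Fin n → ((M ⧸ p₀) ⧸ N₀)) :=
    LinearMap.pi fun i => N₀.mkQ ∘ₗ LinearMap.toSpanSingleton R _ (x i)
  have hker : LinearMap.ker f = T := by
    ext r
    constructor
    · intro hr
      have hr' : ∀ i, r • x i ∈ N₀ := fun i =>
        (Submodule.Quotient.mk_eq_zero N₀).mp (congrFun (LinearMap.mem_ker.mp hr) i)
      rw [← hN₀colon]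
      refine Submodule.mem_colon.mpr fun m _ => ?_
      have hm : m ∈ Submodule.span R (Set.range x) := by rw [hx]; trivial
      refine Submodule.span_induction (fun y hy => ?_) (by simp)
        (fun a b _ _ ha hb => by rw [smul_add]; exact add_mem ha hb)
        (fun a y _ hy' => ?_) hm
      · obtain ⟨i, rfl⟩ := hy
        exact hr' i
      · rw [smul_comm]
        exact N₀.smul_mem a hy'
    · intro hr
      have hr' : r ∈ N₀.colon ⊤ := hN₀colon.symm ▸ hr
      refine LinearMap.mem_ker.mpr (funext fun i => ?_)
      exact (Submodule.Quotient.mk_eq_zero N₀).mpr (Submodule.mem_colon.mp hr' (x i) trivial)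
  haveI : IsNoetherian R ((M ⧸ p₀) ⧸ N₀) := hnoethQuot
  have hinj : Function.Injective ((T : Submodule R R).liftQ f hker.ge) := by
    rw [← LinearMap.ker_eq_bot]
    exact Submodule.ker_liftQ_eq_bot _ _ _ hker.le
  haveI hRT : IsNoetherian R (R ⧸ (T : Submodule R R)) :=
    isNoetherian_of_injective _ hinj
  -- M ⧸ p₀ is a quotient of (Fin n → R ⧸ T)
  have hTkill : ∀ r ∈ T, ∀ m : M ⧸ p₀, r • m = 0 := fun r hr m => by
    simpa using Submodule.mem_colon.mp hr m trivial
  let e : ∀ _ : Fin n, (R ⧸ (T : Submodule R R)) →ₗ[R] (M ⧸ p₀) := fun i =>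
    (T : Submodule R R).liftQ (LinearMap.toSpanSingleton R _ (x i)) (fun r hr => by
      rw [LinearMap.mem_ker, LinearMap.toSpanSingleton_apply]
      exact hTkill r hr (x i))
  let g : (Fin n → R ⧸ (T : Submodule R R)) →ₗ[R] (M ⧸ p₀) :=
    ∑ i, (e i) ∘ₗ LinearMap.proj i
  have hgsurj : Function.Surjective g := by
    rw [← LinearMap.range_eq_top, eq_top_iff, ← hx, Submodule.span_le]
    rintro _ ⟨i, rfl⟩
    refine ⟨(Pi.single i (Submodule.Quotient.mk (1 : R)) : Fin n → R ⧸ (T : Submodule R R)), ?_⟩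
    have : g ((Pi.single i (Submodule.Quotient.mk (1 : R)) : Fin n → R ⧸ (T : Submodule R R))) =
        ∑ j, e j ((Pi.single i (Submodule.Quotient.mk (1 : R)) : Fin n → R ⧸ (T : Submodule R R)) j) := by
      simp [g, LinearMap.sum_apply, LinearMap.comp_apply]
    rw [this, Finset.sum_eq_single i]
    · rw [Pi.single_eq_same]
      show (e i) (Submodule.Quotient.mk (1 : R)) = x i
      rw [show (e i) (Submodule.Quotient.mk (1 : R)) =
        (LinearMap.toSpanSingleton R _ (x i)) 1 from Submodule.liftQ_apply _ _ _]
      rw [LinearMap.toSpanSingleton_apply, one_smul]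
    · intro j _ hj
      rw [Pi.single_eq_of_ne hj, map_zero]
    · intro h
      exact absurd (Finset.mem_univ i) h
  exact isNoetherian_of_surjective g (LinearMap.range_eq_top.mpr hgsurj)

private theorem ArtinTateAux.smul_top_max {C₀ A : Type*} [CommRing C₀] [Ring A] [Algebra C₀ A]
    [IsNoetherianRing A]
    (S : Set (Submodule C₀ A)) (hne : S.Nonempty)
    (hform : ∀ p ∈ S, ∃ I : Ideal C₀, p = I • ⊤) :
    ∃ p ∈ S, ∀ q ∈ S, p ≤ q → q = p := by
  have hstab : ∀ p ∈ S, ∀ (a x : A), x ∈ p → a * x ∈ p := by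
    rintro p hp a x hx
    obtain ⟨I, rfl⟩ := hform p hp
    refine Submodule.smul_induction_on hx (fun i hi m hm => ?_) (fun x y hx hy => ?_)
    · rw [mul_smul_comm]; exact Submodule.smul_mem_smul hi trivial
    · rw [mul_add]; exact add_mem hx hy
  have hcar : ∀ p ∈ S, (Submodule.span A (p : Set A) : Set A) = (p : Set A) := by
    intro p hp
    refine le_antisymm ?_ Submodule.subset_span
    intro x hx
    refine Submodule.span_induction (fun y hy => hy) (zero_mem p) (fun a b _ _ ha hb => add_mem ha hb)
      (fun a y _ hy => hstab p hp a y hy) hx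
  obtain ⟨m, hmS', hmax⟩ :=
    (set_has_maximal_iff_noetherian.mpr (inferInstance : IsNoetherian A A))
      ((fun p : Submodule C₀ A => Submodule.span A (p : Set A)) '' S) (hne.image _)
  obtain ⟨p₀, hp₀S, rfl⟩ := hmS'
  refine ⟨p₀, hp₀S, fun q hq hle => ?_⟩
  have h1 : Submodule.span A (q : Set A) = Submodule.span A (p₀ : Set A) := by
    by_contra hne'
    exact hmax _ ⟨q, hq, rfl⟩ (lt_of_le_of_ne (Submodule.span_mono hle) (Ne.symm hne'))
  apply SetLike.coe_injective
  rw [← hcar q hq, ← hcar p₀ hp₀S, h1]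

/-- Eakin–Nagata–Formanek: if `A` is a noetherian ring which is module-finite over a
(central) commutative ring `C₀`, then `A` is noetherian as a `C₀`-module. -/
private theorem ArtinTateAux.isNoetherian_module {C₀ A : Type*} [CommRing C₀] [Ring A]
    [Algebra C₀ A] [Module.Finite C₀ A] [IsNoetherianRing A] :
    IsNoetherian C₀ A :=
  ArtinTateAux.formanek (ArtinTateAux.smul_top_max)

end AuxArtinTate

/-- **Artin–Tate lemma.** Let `R ⊆ C ⊆ A` be rings with `C` central in `A` (encoded by `A` being
a `C`-algebra with compatible scalar towers and injective structure maps), `A` a finitely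
generated `R`-algebra, `A` a finitely generated `C`-module, and `A` noetherian.
Then `C` is a finitely generated `R`-algebra. -/
theorem artin_tate_central_subalgebra
    (R C A : Type*) [CommRing R] [CommRing C] [Ring A]
    [Algebra R C] [Algebra C A] [Algebra R A] [IsScalarTower R C A]
    (hRC : Function.Injective (algebraMap R C))
    (hCA : Function.Injective (algebraMap C A))
    (hfgAlg : Algebra.FiniteType R A)
    (hfgMod : Module.Finite C A)
    (hNoeth : IsNoetherianRing A) :
    Algebra.FiniteType R C := by
  obtain ⟨C₀, hC₀, hC₀A⟩ := exists_subalgebra_of_fg R C A hfgAlg.out hfgMod.fg_top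
  haveI : Module.Finite C₀ A := ⟨hC₀A⟩
  haveI hN : IsNoetherian C₀ A := ArtinTateAux.isNoetherian_module
  refine ⟨Algebra.fg_trans' (C₀.fg_top.2 hC₀) (Subalgebra.fg_of_submodule_fg ?_)⟩
  exact fg_of_injective (IsScalarTower.toAlgHom C₀ C A).toLinearMap hCA
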